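/- Let A ∈ ℝ^{n×n} be symmetric, fix a partition of {1,…,n} into nonempty clusters S_1,…,S_r with sizes m_k, let β ∈ ℝ, and let Λ be the matrix of the dual construction. Then Λ·𝟙_{S_k} = 0 for every cluster k, where 𝟙_{S_k} ∈ ℝ^n is the indicator vector of S_k; consequently Λ·X0 = 0, where X0 is the normalized ground-truth clustering matrix with (X0)_{ij} = 1/m_k if i and j both lie in S_k and 0 otherwise. -/
import Mathlib


open Matrix BigOperators

noncomputable section

/-- The cluster `S_k` of a cluster assignment `z`. -/
def cluster {n r : ℕ} (z : Fin n → Fin r) (k : Fin r) : Finset (Fin n) :=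
  Finset.univ.filter (fun i => z i = k)

/-- The cluster size `m_k`. -/
def csize {n r : ℕ} (z : Fin n → Fin r) (k : Fin r) : ℕ := (cluster z k).card

/-- `d_u(S_k) = Σ_{j ∈ S_k} A_{uj}`, the number of edges from node `u` to cluster `k`. -/
def deg {n r : ℕ} (A : Matrix (Fin n) (Fin n) ℝ) (z : Fin n → Fin r)
    (u : Fin n) (k : Fin r) : ℝ :=
  ∑ j ∈ cluster z k, A u j

/-- `𝟙ᵀ A_{S_k S_ℓ} 𝟙 = Σ_{i ∈ S_k} Σ_{j ∈ S_ℓ} A_{ij}`. -/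
def blocksum {n r : ℕ} (A : Matrix (Fin n) (Fin n) ℝ) (z : Fin n → Fin r)
    (k ℓ : Fin r) : ℝ :=
  ∑ i ∈ cluster z k, ∑ j ∈ cluster z ℓ, A i j

/-- `φ_k = −(1/2)·(β + 𝟙ᵀA_{S_k}𝟙/m_k)` of the dual construction. -/
def phi {n r : ℕ} (A : Matrix (Fin n) (Fin n) ℝ) (z : Fin n → Fin r) (β : ℝ)
    (k : Fin r) : ℝ :=
  -(1 / 2) * (β + blocksum A z k k / (csize z k : ℝ))

/-- The dual vector `α`, defined blockwise by `α_{S_k} = (A_{S_k}𝟙 + φ_k·𝟙)/m_k`;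
its entry at a node `u ∈ S_k` is `(d_u(S_k) + φ_k)/m_k`. -/
def alpha {n r : ℕ} (A : Matrix (Fin n) (Fin n) ℝ) (z : Fin n → Fin r) (β : ℝ)
    (u : Fin n) : ℝ :=
  (deg A z u (z u) + phi A z β (z u)) / (csize z (z u) : ℝ)

/-- The dual matrix `Λ`, defined blockwise by
`Λ_{S_k} = −A_{S_k} + 𝟙α_{S_k}ᵀ + α_{S_k}𝟙ᵀ + βI` and, for `k ≠ ℓ`,
`Λ_{S_kS_ℓ} = −(I − E_{m_k}/m_k)·A_{S_kS_ℓ}·(I − E_{m_ℓ}/m_ℓ)`. -/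
def Lam {n r : ℕ} (A : Matrix (Fin n) (Fin n) ℝ) (z : Fin n → Fin r) (β : ℝ) :
    Matrix (Fin n) (Fin n) ℝ :=
  Matrix.of fun u v =>
    if z u = z v then
      -A u v + alpha A z β u + alpha A z β v + (if u = v then β else 0)
    else
      -(A u v - (∑ i ∈ cluster z (z u), A i v) / (csize z (z u) : ℝ)
          - (∑ j ∈ cluster z (z v), A u j) / (csize z (z v) : ℝ)
          + blocksum A z (z u) (z v) / ((csize z (z u) : ℝ) * (csize z (z v) : ℝ)))

/-- The dual matrix `Γ`, defined blockwise by `Γ_{S_k} = 0` and, for `k ≠ ℓ`,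
`Γ_{S_kS_ℓ} = −A_{S_kS_ℓ} − Λ_{S_kS_ℓ} + 𝟙α_{S_ℓ}ᵀ + α_{S_k}𝟙ᵀ`. -/
def Gam {n r : ℕ} (A : Matrix (Fin n) (Fin n) ℝ) (z : Fin n → Fin r) (β : ℝ) :
    Matrix (Fin n) (Fin n) ℝ :=
  Matrix.of fun u v =>
    if z u = z v then 0
    else -A u v - Lam A z β u v + alpha A z β v + alpha A z β u

/-- The normalized ground-truth clustering matrix `X0`. -/
def X0 {n r : ℕ} (z : Fin n → Fin r) : Matrix (Fin n) (Fin n) ℝ :=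
  Matrix.of fun i j => if z i = z j then (1 : ℝ) / (csize z (z i)) else 0

/-- The indicator vector `𝟙_{S_k}` of cluster `k`. -/
def indic {n r : ℕ} (z : Fin n → Fin r) (k : Fin r) : Fin n → ℝ :=
  fun i => if z i = k then 1 else 0

lemma csize_ne_zero {n r : ℕ} {z : Fin n → Fin r} (hz : Function.Surjective z) (k : Fin r) :
    (csize z k : ℝ) ≠ 0 := by
  obtain ⟨i, hi⟩ := hz k
  have : (cluster z k).Nonempty := ⟨i, by simp [cluster, hi]⟩
  simpa [csize] using Finset.card_ne_zero.mpr this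

lemma mem_cluster {n r : ℕ} {z : Fin n → Fin r} {k : Fin r} {v : Fin n} :
    v ∈ cluster z k ↔ z v = k := by simp [cluster]

lemma sum_Lam_cluster {n r : ℕ} (z : Fin n → Fin r) (hz : Function.Surjective z)
    (A : Matrix (Fin n) (Fin n) ℝ) (β : ℝ) (k : Fin r) (u : Fin n) :
    ∑ v ∈ cluster z k, Lam A z β u v = 0 := by
  have hm : (csize z k : ℝ) ≠ 0 := csize_ne_zero hz k
  by_cases hu : z u = k
  · have hmem : u ∈ cluster z k := mem_cluster.mpr hu
    have hcongr : ∀ v ∈ cluster z k, Lam A z β u v =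
        -A u v + alpha A z β u + alpha A z β v + (if u = v then β else 0) := by
      intro v hv
      have hv' : z v = k := mem_cluster.mp hv
      simp [Lam, hu.trans hv'.symm]
    rw [Finset.sum_congr rfl hcongr]
    have halpha : ∀ v ∈ cluster z k, alpha A z β v =
        (deg A z v k + phi A z β k) / (csize z k : ℝ) := by
      intro v hv
      have hv' : z v = k := mem_cluster.mp hv
      simp [alpha, hv']
    have hsum : ∑ v ∈ cluster z k, alpha A z β v =
        (blocksum A z k k + (csize z k : ℝ) * phi A z β k) / (csize z k : ℝ) := by
      rw [Finset.sum_congr rfl halpha, ← Finset.sum_div, Finset.sum_add_distrib,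
        Finset.sum_const]
      simp [blocksum, deg, csize, mul_comm]
    simp only [Finset.sum_add_distrib, hsum, Finset.sum_neg_distrib,
      Finset.sum_const, nsmul_eq_mul, Finset.sum_ite_eq, hmem, if_pos]
    have hdeg : ∑ v ∈ cluster z k, A u v = deg A z u k := rfl
    have hcsize : (cluster z k).card = csize z k := rfl
    rw [hdeg, hcsize]
    simp only [alpha, phi, hu]
    field_simp
    ring
  · have hcongr : ∀ v ∈ cluster z k, Lam A z β u v =
        -A u v + (∑ i ∈ cluster z (z u), A i v) / (csize z (z u) : ℝ)
          + deg A z u k / (csize z k : ℝ)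
          - blocksum A z (z u) k / ((csize z (z u) : ℝ) * (csize z k : ℝ)) := by
      intro v hv
      have hv' : z v = k := mem_cluster.mp hv
      have hne : ¬ z u = z v := by rw [hv']; exact hu
      simp only [Lam, Matrix.of_apply, hv']
      rw [if_neg hu]
      have : (∑ j ∈ cluster z k, A u j) = deg A z u k := rfl
      rw [this]
      ring
    rw [Finset.sum_congr rfl hcongr]
    have hm1 : (csize z (z u) : ℝ) ≠ 0 := csize_ne_zero hz (z u)
    have hcomm : ∑ v ∈ cluster z k, (∑ i ∈ cluster z (z u), A i v) =
        blocksum A z (z u) k := by rw [Finset.sum_comm]; rfl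
    have hdeg : ∑ v ∈ cluster z k, A u v = deg A z u k := rfl
    simp only [Finset.sum_sub_distrib, Finset.sum_add_distrib, Finset.sum_neg_distrib,
      ← Finset.sum_div, hcomm, hdeg, Finset.sum_const, nsmul_eq_mul]
    have hcsize : ((cluster z k).card : ℝ) = (csize z k : ℝ) := rfl
    rw [hcsize]
    field_simp
    ring

/-- The dual matrix `Λ` annihilates each cluster indicator vector `𝟙_{S_k}`, and
consequently `Λ·X0 = 0`. -/
theorem Lam_mulVec_indicator_eq_zero (n r : ℕ) (hn : 1 ≤ n) (hr : 1 ≤ r)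
    (z : Fin n → Fin r) (hz : Function.Surjective z)
    (A : Matrix (Fin n) (Fin n) ℝ) (hA : A.IsSymm) (β : ℝ) :
    (∀ k : Fin r, (Lam A z β).mulVec (indic z k) = 0) ∧
      Lam A z β * X0 z = 0 := by
  have key : ∀ (k : Fin r) (u : Fin n),
      ∑ v, Lam A z β u v * indic z k v = 0 := by
    intro k u
    have : ∑ v, Lam A z β u v * indic z k v
        = ∑ v ∈ cluster z k, Lam A z β u v := by
      simp only [indic, mul_ite, mul_one, mul_zero, cluster, Finset.sum_filter]
    rw [this, sum_Lam_cluster z hz A β k u]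
  constructor
  · intro k
    funext u
    simpa [Matrix.mulVec, dotProduct] using key k u
  · ext u j
    have hX : ∀ v, X0 z v j = indic z (z j) v / (csize z (z j) : ℝ) := by
      intro v
      by_cases h : z v = z j
      · simp [X0, indic, h]
      · simp [X0, indic, h]
    have : (Lam A z β * X0 z) u j
        = (∑ v, Lam A z β u v * indic z (z j) v) / (csize z (z j) : ℝ) := by
      simp only [Matrix.mul_apply, hX, Finset.sum_div, mul_div_assoc]
    rw [this, key (z j) u]
    simp
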